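/- Let φ: (M³, g̃) → (N²,h) be a submersive harmonic morphism with dilation λ and integrability 2-form Ω̃. Let η be a given 1-form on M and θ a 1-form satisfying dθ + η ∧ θ = Ω̃, with θ(Ũ) ≠ 0 everywhere for Ũ the g̃-unit vertical field. Set g = (φ*h)/λ² + θ². Then φ: (M³,g) → (N²,h) is semi-conformal, and the mean curvature of its fibres equals the g-horizontal part of η♯. -/

import Mathlib

open scoped BigOperators

set_option maxHeartbeats 3000000
noncomputable section

/-- Partial derivative of `f` in the `i`-th coordinate direction. -/
def pd {n : ℕ} (f : (Fin n → ℝ) → ℝ) (i : Fin n) (x : Fin n → ℝ) : ℝ :=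
  fderiv ℝ f x (Pi.single i 1)

/-- Pointwise inverse of a metric (the components `g^{ij}`). -/
def ginv {n : ℕ} (g : (Fin n → ℝ) → Matrix (Fin n) (Fin n) ℝ) (x : Fin n → ℝ) :
    Matrix (Fin n) (Fin n) ℝ := (g x)⁻¹

/-- A smooth Riemannian metric in coordinates. -/
def IsMetric {n : ℕ} (g : (Fin n → ℝ) → Matrix (Fin n) (Fin n) ℝ) : Prop :=
  (∀ i j, ContDiff ℝ (⊤ : ℕ∞) fun x => g x i j) ∧ ∀ x, (g x).IsSymm ∧ (g x).PosDef

/-- A smooth vector field (or componentwise-smooth family). -/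
def SmoothVF {n : ℕ} (X : (Fin n → ℝ) → Fin n → ℝ) : Prop :=
  ∀ k, ContDiff ℝ (⊤ : ℕ∞) fun x => X x k

/-- Christoffel symbols `Γ^k_{ij}` of the metric `g`. -/
def christoffel {n : ℕ} (g : (Fin n → ℝ) → Matrix (Fin n) (Fin n) ℝ)
    (k i j : Fin n) (x : Fin n → ℝ) : ℝ :=
  (1 / 2) * ∑ l, ginv g x k l *
    (pd (fun y => g y l j) i x + pd (fun y => g y l i) j x - pd (fun y => g y i j) l x)

/-- Covariant derivative `(∇_X Y)^k` of the Levi-Civita connection of `g`. -/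
def covD {n : ℕ} (g : (Fin n → ℝ) → Matrix (Fin n) (Fin n) ℝ)
    (X Y : (Fin n → ℝ) → Fin n → ℝ) (x : Fin n → ℝ) (k : Fin n) : ℝ :=
  (∑ i, X x i * pd (fun y => Y y k) i x) + ∑ i, ∑ j, christoffel g k i j x * X x i * Y x j

/-- The Lie bracket of vector fields, `[X,Y]^k = X^i ∂_i Y^k - Y^i ∂_i X^k`. -/
def bracket {n : ℕ} (X Y : (Fin n → ℝ) → Fin n → ℝ) (x : Fin n → ℝ) (k : Fin n) : ℝ :=
  ∑ i, (X x i * pd (fun y => Y y k) i x - Y x i * pd (fun y => X y k) i x)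

/-- `φ : (M³,g) → (N²,h)` is semi-conformal with dilation `λ`, in the local-coordinate
characterization `g^{ij} φ^α_i φ^β_j = λ² h^{αβ}`. -/
def SemiConformal (g : (Fin 3 → ℝ) → Matrix (Fin 3) (Fin 3) ℝ)
    (h : (Fin 2 → ℝ) → Matrix (Fin 2) (Fin 2) ℝ)
    (φ : (Fin 3 → ℝ) → Fin 2 → ℝ) (lam : (Fin 3 → ℝ) → ℝ) : Prop :=
  ∀ x α β, (∑ i, ∑ j, ginv g x i j * pd (fun y => φ y α) i x * pd (fun y => φ y β) j x)
    = lam x ^ 2 * ginv h (φ x) α β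

/-- A vector field is vertical when it lies in `ker dφ`. -/
def Vertical (φ : (Fin 3 → ℝ) → Fin 2 → ℝ) (U : (Fin 3 → ℝ) → Fin 3 → ℝ) : Prop :=
  ∀ x α, (∑ i, pd (fun y => φ y α) i x * U x i) = 0

/-- A vector field of unit length for `g`. -/
def UnitField (g : (Fin 3 → ℝ) → Matrix (Fin 3) (Fin 3) ℝ)
    (U : (Fin 3 → ℝ) → Fin 3 → ℝ) : Prop :=
  ∀ x, (∑ i, ∑ j, g x i j * U x i * U x j) = 1

/-- The dual 1-form `X♭ = g(X,·)`. -/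
def flat (g : (Fin 3 → ℝ) → Matrix (Fin 3) (Fin 3) ℝ)
    (X : (Fin 3 → ℝ) → Fin 3 → ℝ) (j : Fin 3) (x : Fin 3 → ℝ) : ℝ :=
  ∑ k, g x j k * X x k

/-- Horizontal projection (relative to the unit vertical field `U`):
`H X = X - g(X,U) U`. -/
def Hproj (g : (Fin 3 → ℝ) → Matrix (Fin 3) (Fin 3) ℝ)
    (U X : (Fin 3 → ℝ) → Fin 3 → ℝ) (x : Fin 3 → ℝ) (k : Fin 3) : ℝ :=
  X x k - (∑ i, ∑ j, g x i j * X x i * U x j) * U x k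

/-- The mean curvature vector `μ = ∇_U U` of the fibres (`U` the unit vertical field). -/
def meanCurv (g : (Fin 3 → ℝ) → Matrix (Fin 3) (Fin 3) ℝ)
    (U : (Fin 3 → ℝ) → Fin 3 → ℝ) (x : Fin 3 → ℝ) (k : Fin 3) : ℝ :=
  covD g U U x k

/-- Lie derivative of the metric: `(L_E g)_{ij} = E^k ∂_k g_{ij} + g_{kj} ∂_i E^k + g_{ik} ∂_j E^k`. -/
def lieD {n : ℕ} (g : (Fin n → ℝ) → Matrix (Fin n) (Fin n) ℝ)
    (E : (Fin n → ℝ) → Fin n → ℝ) (i j : Fin n) (x : Fin n → ℝ) : ℝ :=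
  (∑ k, E x k * pd (fun y => g y i j) k x)
    + (∑ k, g x k j * pd (fun y => E y k) i x)
    + ∑ k, g x i k * pd (fun y => E y k) j x

/-- The metric `g = φ*h/λ² + θ ⊗ θ`. -/
def pullMetric (h : (Fin 2 → ℝ) → Matrix (Fin 2) (Fin 2) ℝ)
    (φ : (Fin 3 → ℝ) → Fin 2 → ℝ) (lam : (Fin 3 → ℝ) → ℝ)
    (θ : (Fin 3 → ℝ) → Fin 3 → ℝ) (x : Fin 3 → ℝ) : Matrix (Fin 3) (Fin 3) ℝ :=
  Matrix.of fun i j =>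
    (1 / lam x ^ 2) *
        (∑ α, ∑ β, h (φ x) α β * pd (fun y => φ y α) i x * pd (fun y => φ y β) j x)
      + θ x i * θ x j


open scoped Matrix
theorem pd_smooth {n : ℕ} {f : (Fin n → ℝ) → ℝ} (hf : ContDiff ℝ (⊤:ℕ∞) f) (i : Fin n) :
    ContDiff ℝ (⊤:ℕ∞) (pd f i) :=
  (hf.fderiv_right (le_refl _)).clm_apply contDiff_const

theorem pd_mul {n : ℕ} {f g : (Fin n → ℝ) → ℝ} {x : Fin n → ℝ} (hf : DifferentiableAt ℝ f x)
    (hg : DifferentiableAt ℝ g x) (i : Fin n) :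
    pd (fun y => f y * g y) i x = pd f i x * g x + f x * pd g i x := by
  unfold pd
  rw [fderiv_fun_mul hf hg]
  simp only [ContinuousLinearMap.add_apply, ContinuousLinearMap.smul_apply, smul_eq_mul]
  ring

theorem pd_sum {n : ℕ} {m : Type*} [Fintype m] {f : m → (Fin n → ℝ) → ℝ} {x : Fin n → ℝ}
    (hf : ∀ k, DifferentiableAt ℝ (f k) x) (i : Fin n) :
    pd (fun y => ∑ k, f k y) i x = ∑ k, pd (f k) i x := by
  unfold pd
  rw [fderiv_fun_sum (fun k _ => hf k)]
  simp

theorem pd_const {n : ℕ} (c : ℝ) (i : Fin n) (x : Fin n → ℝ) :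
    pd (fun _ => c) i x = 0 := by
  unfold pd; simp

theorem ker_span (P : Matrix (Fin 2) (Fin 3) ℝ) (hsurj : Function.Surjective P.mulVec)
    (u : Fin 3 → ℝ) (hu : P.mulVec u = 0) (hu0 : u ≠ 0) :
    ∀ v, P.mulVec v = 0 → ∃ c : ℝ, v = c • u := by
  set f := P.mulVecLin with hf
  have hrange : LinearMap.range f = ⊤ := LinearMap.range_eq_top.mpr hsurj
  have hdim : Module.finrank ℝ (LinearMap.ker f) = 1 := by
    have h1 := LinearMap.finrank_range_add_finrank_ker f
    rw [hrange] at h1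
    simp [Module.finrank_pi] at h1 ⊢
    omega
  have hspan : (Submodule.span ℝ {u} : Submodule ℝ (Fin 3 → ℝ)) = LinearMap.ker f := by
    apply Submodule.eq_of_le_of_finrank_eq
    · rw [Submodule.span_le, Set.singleton_subset_iff]
      exact hu
    · rw [finrank_span_singleton hu0, hdim]
  intro v hv
  have h2 : v ∈ Submodule.span ℝ ({u} : Set (Fin 3 → ℝ)) := by
    rw [hspan]; exact hv
  obtain ⟨c, hc⟩ := Submodule.mem_span_singleton.mp h2
  exact ⟨c, hc.symm⟩

theorem pointwise_alg (P : Matrix (Fin 2) (Fin 3) ℝ) (t u : Fin 3 → ℝ)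
    (hm : Matrix (Fin 2) (Fin 2) ℝ) (L : ℝ)
    (hsurj : Function.Surjective P.mulVec)
    (hu : P.mulVec u = 0) (hu0 : u ≠ 0) (htu : (∑ j, t j * u j) ≠ 0)
    (hmpd : hm.PosDef) (hL : L ≠ 0) :
    ∀ G : Matrix (Fin 3) (Fin 3) ℝ,
      (G = Matrix.of fun i j =>
        (1 / L ^ 2) * (∑ α, ∑ β, hm α β * P α i * P β j) + t i * t j) →
      (G * G⁻¹ = 1 ∧ G⁻¹ * G = 1) ∧
      (∀ α β : Fin 2, (∑ i, ∑ j, G⁻¹ i j * P α i * P β j) = L ^ 2 * hm⁻¹ α β) := by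
  intro G hG
  set M : Matrix (Fin 3) (Fin 3) ℝ := Matrix.of ![P 0, P 1, t] with hM
  have hMP : ∀ (α : Fin 2) (i : Fin 3), M (Fin.castSucc α) i = P α i := by
    intro α i; fin_cases α <;> simp [hM]
  have hMt : ∀ i, M 2 i = t i := by intro i; simp [hM]
  have hMdet : M.det ≠ 0 := by
    intro hdet
    obtain ⟨v, hv0, hv⟩ := (Matrix.exists_mulVec_eq_zero_iff).mpr hdet
    have hPv : P.mulVec v = 0 := by
      funext α
      have h2 := congrFun hv (Fin.castSucc α)
      simpa [Matrix.mulVec, dotProduct, hMP] using h2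
    obtain ⟨c, hc⟩ := ker_span P hsurj u hu hu0 v hPv
    have htv : (∑ j, t j * v j) = 0 := by
      have h2 := congrFun hv (2 : Fin 3)
      simpa [Matrix.mulVec, dotProduct, hMt] using h2
    rw [hc] at htv
    have hc0 : c = 0 := by
      have h3 : c * (∑ j, t j * u j) = 0 := by
        rw [Finset.mul_sum, ← htv]
        exact Finset.sum_congr rfl fun j _ => by simp [mul_comm, mul_left_comm]
      rcases mul_eq_zero.mp h3 with h | h
      · exact h
      · exact absurd h htu
    rw [hc, hc0] at hv0; simp at hv0
  have hMunit : IsUnit M.det := isUnit_iff_ne_zero.mpr hMdet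
  set D : Matrix (Fin 3) (Fin 3) ℝ := Matrix.of (fun a b =>
    if ha : (a : ℕ) < 2 then (if hb : (b : ℕ) < 2 then (1 / L ^ 2) * hm ⟨a, ha⟩ ⟨b, hb⟩ else 0)
    else (if (b : ℕ) < 2 then 0 else 1)) with hD
  have hmunit : IsUnit hm.det := isUnit_iff_ne_zero.mpr (ne_of_gt hmpd.det_pos)
  have hhm : hm * hm⁻¹ = 1 := Matrix.mul_nonsing_inv hm hmunit
  have hhm' : hm⁻¹ * hm = 1 := Matrix.nonsing_inv_mul hm hmunit
  set Q := hm⁻¹ with hQ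
  set E : Matrix (Fin 3) (Fin 3) ℝ := Matrix.of (fun a b =>
    if ha : (a : ℕ) < 2 then (if hb : (b : ℕ) < 2 then L ^ 2 * Q ⟨a, ha⟩ ⟨b, hb⟩ else 0)
    else (if (b : ℕ) < 2 then 0 else 1)) with hE
  have hDE : D * E = 1 := by
    ext a b
    have h00 := congrFun (congrFun hhm 0) 0
    have h01 := congrFun (congrFun hhm 0) 1
    have h10 := congrFun (congrFun hhm 1) 0
    have h11 := congrFun (congrFun hhm 1) 1
    simp [Matrix.mul_apply, Fin.sum_univ_three, Fin.sum_univ_two, Matrix.one_apply] at h00 h01 h10 h11 ⊢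
    fin_cases a <;> fin_cases b <;>
      simp [hD, hE] <;> field_simp <;> [linear_combination h00; linear_combination h01; linear_combination h10; linear_combination h11]
  have hGfact : G = Mᵀ * D * M := by
    rw [hG]
    ext i j
    fin_cases i <;> fin_cases j <;>
      simp [Matrix.mul_apply, Matrix.transpose_apply, Fin.sum_univ_three, Fin.sum_univ_two, hD, hM,
        Matrix.cons_val_zero, Matrix.cons_val_one, Matrix.head_cons, Matrix.vecHead, Matrix.vecTail] <;> ring
  have hDdet : IsUnit D.det := by
    have h2 : D.det * E.det = 1 := by rw [← Matrix.det_mul, hDE, Matrix.det_one]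
    exact IsUnit.of_mul_eq_one _ h2
  have hMTdet : IsUnit Mᵀ.det := by rwa [Matrix.det_transpose]
  have hGC : G * (M⁻¹ * E * (Mᵀ)⁻¹) = 1 := by
    rw [hGfact]
    calc Mᵀ * D * M * (M⁻¹ * E * Mᵀ⁻¹)
        = Mᵀ * D * (M * M⁻¹) * E * Mᵀ⁻¹ := by noncomm_ring
      _ = Mᵀ * (D * E) * Mᵀ⁻¹ := by rw [Matrix.mul_nonsing_inv M hMunit]; noncomm_ring
      _ = 1 := by rw [hDE, Matrix.mul_one, Matrix.mul_nonsing_inv _ hMTdet]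
  have hGdet : IsUnit G.det := by
    have h2 : G.det * (M⁻¹ * E * (Mᵀ)⁻¹).det = 1 := by rw [← Matrix.det_mul, hGC, Matrix.det_one]
    exact IsUnit.of_mul_eq_one _ h2
  have hGinv : G⁻¹ = M⁻¹ * E * (Mᵀ)⁻¹ := Matrix.inv_eq_right_inv hGC
  constructor
  · exact ⟨Matrix.mul_nonsing_inv G hGdet, Matrix.nonsing_inv_mul G hGdet⟩
  · intro α β
    have key : M * G⁻¹ * Mᵀ = E := by
      rw [hGinv]
      calc M * (M⁻¹ * E * Mᵀ⁻¹) * Mᵀ = (M * M⁻¹) * E * (Mᵀ⁻¹ * Mᵀ) := by noncomm_ring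
        _ = E := by
            rw [Matrix.mul_nonsing_inv M hMunit, Matrix.nonsing_inv_mul _ hMTdet,
              Matrix.one_mul, Matrix.mul_one]
    have h2 := congrFun (congrFun key (Fin.castSucc α)) (Fin.castSucc β)
    have h3 : (M * G⁻¹ * Mᵀ) (Fin.castSucc α) (Fin.castSucc β)
        = ∑ i, ∑ j, G⁻¹ i j * P α i * P β j := by
      simp only [Matrix.mul_apply, Matrix.transpose_apply, Finset.sum_mul, Finset.mul_sum]
      rw [Finset.sum_comm]
      refine Finset.sum_congr rfl fun i _ => Finset.sum_congr rfl fun j _ => ?_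
      rw [hMP, hMP]
      ring
    have h4 : E (Fin.castSucc α) (Fin.castSucc β) = L ^ 2 * Q α β := by
      have hav : ((Fin.castSucc α : Fin 3) : ℕ) < 2 := α.isLt
      have hbv : ((Fin.castSucc β : Fin 3) : ℕ) < 2 := β.isLt
      simp only [hE, Matrix.of_apply, dif_pos hav, dif_pos hbv]
      congr 1
    rw [← h3, h2, h4, hQ]

theorem key_contract (g : (Fin 3 → ℝ) → Matrix (Fin 3) (Fin 3) ℝ)
    (X : (Fin 3 → ℝ) → Fin 3 → ℝ) (x : Fin 3 → ℝ)
    (hgd : ∀ i j, DifferentiableAt ℝ (fun y => g y i j) x)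
    (hXd : ∀ k, DifferentiableAt ℝ (fun y => X y k) x)
    (hsym : ∀ i j, g x j i = g x i j)
    (hunit : ∀ y, (∑ i, ∑ j, g y i j * X y i * X y j) = (1 : ℝ))
    (hinv : g x * (ginv g x) = 1) (m : Fin 3) :
    ∑ k, g x m k * covD g X X x k
      = ∑ i, X x i * (pd (fun y => flat g X m y) i x - pd (fun y => flat g X i y) m x) := by
  have hdw : ∀ p q, pd (fun y => flat g X p y) q x
      = (∑ k, pd (fun y => g y p k) q x * X x k) + ∑ k, g x p k * pd (fun y => X y k) q x := by
    intro p q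
    have h0 : (fun y => flat g X p y) = fun y => ∑ k, g y p k * X y k := rfl
    rw [h0, pd_sum (fun k => (hgd p k).fun_mul (hXd k)), ← Finset.sum_add_distrib]
    exact Finset.sum_congr rfl fun k _ => pd_mul (hgd p k) (hXd k) q
  have hF3 : (∑ i, ∑ j, (pd (fun y => g y i j) m x * X x i * X x j
      + g x i j * (pd (fun y => X y i) m x * X x j + X x i * pd (fun y => X y j) m x))) = 0 := by
    have h1 : pd (fun y => ∑ i, ∑ j, g y i j * X y i * X y j) m x = 0 := by
      have h2 : (fun y => ∑ i, ∑ j, g y i j * X y i * X y j) = fun _ => (1:ℝ) := funext hunit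
      rw [h2, pd_const]
    rw [← h1, pd_sum (fun i => DifferentiableAt.fun_sum
      (fun j _ => ((hgd i j).fun_mul (hXd i)).fun_mul (hXd j)))]
    refine Finset.sum_congr rfl fun i _ => ?_
    rw [pd_sum (fun j => ((hgd i j).fun_mul (hXd i)).fun_mul (hXd j))]
    refine Finset.sum_congr rfl fun j _ => ?_
    rw [pd_mul ((hgd i j).fun_mul (hXd i)) (hXd j), pd_mul (hgd i j) (hXd i)]
    ring
  have hF2 : ∀ l, (∑ k, g x m k * ginv g x k l) = if m = l then 1 else 0 := by
    intro l
    have h2 := congrFun (congrFun hinv m) l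
    simpa [Matrix.mul_apply, Matrix.one_apply] using h2
  simp only [covD, christoffel]
  simp only [hdw]
  have h20 := hF2 0
  have h21 := hF2 1
  have h22 := hF2 2
  simp only [Fin.sum_univ_three] at hF3 h20 h21 h22 ⊢
  have hm3 : m = 0 ∨ m = 1 ∨ m = 2 := by fin_cases m <;> simp
  rcases hm3 with rfl | rfl | rfl
  · norm_num [Fin.ext_iff] at h20 h21 h22
    linear_combination
      (1/2) * (((pd (fun y => g y 0 0) 0 x) + (pd (fun y => g y 0 0) 0 x) - (pd (fun y => g y 0 0) 0 x)) * (X x 0) * (X x 0) + ((pd (fun y => g y 0 1) 0 x) + (pd (fun y => g y 0 0) 1 x) - (pd (fun y => g y 0 1) 0 x)) * (X x 0) * (X x 1) + ((pd (fun y => g y 0 2) 0 x) + (pd (fun y => g y 0 0) 2 x) - (pd (fun y => g y 0 2) 0 x)) * (X x 0) * (X x 2) + ((pd (fun y => g y 0 0) 1 x) + (pd (fun y => g y 0 1) 0 x) - (pd (fun y => g y 1 0) 0 x)) * (X x 1) * (X x 0) + ((pd (fun y => g y 0 1) 1 x) + (pd (fun y => g y 0 1) 1 x) - (pd (fun y =>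 g y 1 1) 0 x)) * (X x 1) * (X x 1) + ((pd (fun y => g y 0 2) 1 x) + (pd (fun y => g y 0 1) 2 x) - (pd (fun y => g y 1 2) 0 x)) * (X x 1) * (X x 2) + ((pd (fun y => g y 0 0) 2 x) + (pd (fun y => g y 0 2) 0 x) - (pd (fun y => g y 2 0) 0 x)) * (X x 2) * (X x 0) + ((pd (fun y => g y 0 1) 2 x) + (pd (fun y => g y 0 2) 1 x) - (pd (fun y => g y 2 1) 0 x)) * (X x 2) * (X x 1) + ((pd (fun y => g y 0 2) 2 x) + (pd (fun y => g y 0 2) 2 x) - (pd (fun y => g y 2 2) 0 x)) * (X x 2) * (X x 2)) * h20 +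
      (1/2) * (((pd (fun y => g y 1 0) 0 x) + (pd (fun y => g y 1 0) 0 x) - (pd (fun y => g y 0 0) 1 x)) * (X x 0) * (X x 0) + ((pd (fun y => g y 1 1) 0 x) + (pd (fun y => g y 1 0) 1 x) - (pd (fun y => g y 0 1) 1 x)) * (X x 0) * (X x 1) + ((pd (fun y => g y 1 2) 0 x) + (pd (fun y => g y 1 0) 2 x) - (pd (fun y => g y 0 2) 1 x)) * (X x 0) * (X x 2) + ((pd (fun y => g y 1 0) 1 x) + (pd (fun y => g y 1 1) 0 x) - (pd (fun y => g y 1 0) 1 x)) * (X x 1) * (X x 0) + ((pd (fun y => g y 1 1) 1 x) + (pd (fun y => g y 1 1) 1 x) - (pd (fun y => g y 1 1) 1 x)) * (X x 1) * (X x 1) + ((pd (fun y => g y 1 2) 1 x) + (pd (fun y => g y 1 1) 2 x) - (pd (fun y => g y 1 2) 1 x)) * (X x 1) * (X x 2) + ((pd (fun y => g y 1 0) 2 x) + (pd (fun y => g y 1 2) 0 x) - (pd (fun y => g y 2 0) 1 x)) * (X x 2) * (X x 0) + ((pd (fun y => g y 1 1) 2 x) + (pd (fun y => g y 1 2) 1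 x) - (pd (fun y => g y 2 1) 1 x)) * (X x 2) * (X x 1) + ((pd (fun y => g y 1 2) 2 x) + (pd (fun y => g y 1 2) 2 x) - (pd (fun y => g y 2 2) 1 x)) * (X x 2) * (X x 2)) * h21 +
      (1/2) * (((pd (fun y => g y 2 0) 0 x) + (pd (fun y => g y 2 0) 0 x) - (pd (fun y => g y 0 0) 2 x)) * (X x 0) * (X x 0) + ((pd (fun y => g y 2 1) 0 x) + (pd (fun y => g y 2 0) 1 x) - (pd (fun y => g y 0 1) 2 x)) * (X x 0) * (X x 1) + ((pd (fun y => g y 2 2) 0 x) + (pd (fun y => g y 2 0) 2 x) - (pd (fun y => g y 0 2) 2 x)) * (X x 0) * (X x 2) + ((pd (fun y => g y 2 0) 1 x) + (pd (fun y => g y 2 1) 0 x) - (pd (fun y => g y 1 0) 2 x)) * (X x 1) * (X x 0) + ((pd (fun y => g y 2 1) 1 x) + (pd (fun y => g y 2 1) 1 x) - (pd (fun y => g y 1 1) 2 x)) * (X x 1) * (X x 1) + ((pd (fun y => g y 2 2) 1 x) + (pd (fun y => g y 2 1) 2 x) - (pd (fun y => g y 1 2) 2 x)) * (X x 1) * (X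 x 2) + ((pd (fun y => g y 2 0) 2 x) + (pd (fun y => g y 2 2) 0 x) - (pd (fun y => g y 2 0) 2 x)) * (X x 2) * (X x 0) + ((pd (fun y => g y 2 1) 2 x) + (pd (fun y => g y 2 2) 1 x) - (pd (fun y => g y 2 1) 2 x)) * (X x 2) * (X x 1) + ((pd (fun y => g y 2 2) 2 x) + (pd (fun y => g y 2 2) 2 x) - (pd (fun y => g y 2 2) 2 x)) * (X x 2) * (X x 2)) * h22 +
      (1/2) * hF3 +
      (1/2) * (X x 0) * (pd (fun y => X y 0) 0 x) * (hsym 0 0) +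
      (1/2) * (X x 0) * (pd (fun y => X y 1) 0 x) * (hsym 1 0) +
      (1/2) * (X x 0) * (pd (fun y => X y 2) 0 x) * (hsym 2 0) +
      (1/2) * (X x 1) * (pd (fun y => X y 0) 0 x) * (hsym 0 1) +
      (1/2) * (X x 1) * (pd (fun y => X y 1) 0 x) * (hsym 1 1) +
      (1/2) * (X x 1) * (pd (fun y => X y 2) 0 x) * (hsym 2 1) +
      (1/2) * (X x 2) * (pd (fun y => X y 0) 0 x) * (hsym 0 2) +
      (1/2) * (X x 2) * (pd (fun y => X y 1) 0 x) * (hsym 1 2) +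
      (1/2) * (X x 2) * (pd (fun y => X y 2) 0 x) * (hsym 2 2)
  · norm_num [Fin.ext_iff] at h20 h21 h22
    linear_combination
      (1/2) * (((pd (fun y => g y 0 0) 0 x) + (pd (fun y => g y 0 0) 0 x) - (pd (fun y => g y 0 0) 0 x)) * (X x 0) * (X x 0) + ((pd (fun y => g y 0 1) 0 x) + (pd (fun y => g y 0 0) 1 x) - (pd (fun y => g y 0 1) 0 x)) * (X x 0) * (X x 1) + ((pd (fun y => g y 0 2) 0 x) + (pd (fun y => g y 0 0) 2 x) - (pd (fun y => g y 0 2) 0 x)) * (X x 0) * (X x 2) + ((pd (fun y => g y 0 0) 1 x) + (pd (fun y => g y 0 1) 0 x) - (pd (fun y => g y 1 0) 0 x)) * (X x 1) * (X x 0) + ((pd (fun y => g y 0 1) 1 x) + (pd (fun y => g y 0 1) 1 x) - (pd (fun y => g y 1 1) 0 x)) * (X x 1) * (X x 1) + ((pd (fun y => g y 0 2) 1 x) + (pd (fun y => g y 0 1) 2 x) - (pd (fun y => g y 1 2) 0 x)) * (X x 1) * (X x 2) + ((pd (fun y => g y 0 0) 2 x) + (pd (fun y => g y 0 2) 0 x)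 - (pd (fun y => g y 2 0) 0 x)) * (X x 2) * (X x 0) + ((pd (fun y => g y 0 1) 2 x) + (pd (fun y => g y 0 2) 1 x) - (pd (fun y => g y 2 1) 0 x)) * (X x 2) * (X x 1) + ((pd (fun y => g y 0 2) 2 x) + (pd (fun y => g y 0 2) 2 x) - (pd (fun y => g y 2 2) 0 x)) * (X x 2) * (X x 2)) * h20 +
      (1/2) * (((pd (fun y => g y 1 0) 0 x) + (pd (fun y => g y 1 0) 0 x) - (pd (fun y => g y 0 0) 1 x)) * (X x 0) * (X x 0) + ((pd (fun y => g y 1 1) 0 x) + (pd (fun y => g y 1 0) 1 x) - (pd (fun y => g y 0 1) 1 x)) * (X x 0) * (X x 1) + ((pd (fun y => g y 1 2) 0 x) + (pd (fun y => g y 1 0) 2 x) - (pd (fun y => g y 0 2) 1 x)) * (X x 0) * (X x 2) + ((pd (fun y => g y 1 0) 1 x) + (pd (fun y => g y 1 1) 0 x) - (pd (fun y => g y 1 0) 1 x)) * (X x 1) * (X x 0) + ((pd (fun y => g y 1 1) 1 x) + (pd (fun y => g y 1 1) 1 x) - (pd (fun y => g y 1 1) 1 x)) * (X x 1) * (X x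 1) + ((pd (fun y => g y 1 2) 1 x) + (pd (fun y => g y 1 1) 2 x) - (pd (fun y => g y 1 2) 1 x)) * (X x 1) * (X x 2) + ((pd (fun y => g y 1 0) 2 x) + (pd (fun y => g y 1 2) 0 x) - (pd (fun y => g y 2 0) 1 x)) * (X x 2) * (X x 0) + ((pd (fun y => g y 1 1) 2 x) + (pd (fun y => g y 1 2) 1 x) - (pd (fun y => g y 2 1) 1 x)) * (X x 2) * (X x 1) + ((pd (fun y => g y 1 2) 2 x) + (pd (fun y => g y 1 2) 2 x) - (pd (fun y => g y 2 2) 1 x)) * (X x 2) * (X x 2)) * h21 +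
      (1/2) * (((pd (fun y => g y 2 0) 0 x) + (pd (fun y => g y 2 0) 0 x) - (pd (fun y => g y 0 0) 2 x)) * (X x 0) * (X x 0) + ((pd (fun y => g y 2 1) 0 x) + (pd (fun y => g y 2 0) 1 x) - (pd (fun y => g y 0 1) 2 x)) * (X x 0) * (X x 1) + ((pd (fun y => g y 2 2) 0 x) + (pd (fun y => g y 2 0) 2 x) - (pd (fun y => g y 0 2) 2 x)) * (X x 0) * (X x 2) + ((pd (fun y => g y 2 0) 1 x) + (pd (fun y => g y 2 1) 0 x) - (pd (fun y => g y 1 0) 2 x)) * (X x 1) * (X x 0) + ((pd (fun y => g y 2 1) 1 x) + (pd (fun y => g y 2 1) 1 x) - (pd (fun y => g y 1 1) 2 x)) * (X x 1) * (X x 1) + ((pd (fun y => g y 2 2) 1 x) + (pd (fun y => g y 2 1) 2 x) - (pd (fun y => g y 1 2) 2 x)) * (X x 1) * (X x 2) + ((pd (fun y => g y 2 0) 2 x) + (pd (fun y => g y 2 2) 0 x) - (pd (fun y => g y 2 0) 2 x)) * (X x 2) * (X x 0) + ((pd (fun y => g y 2 1) 2 x) + (pd (fun y => g y 2 2) 1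 x) - (pd (fun y => g y 2 1) 2 x)) * (X x 2) * (X x 1) + ((pd (fun y => g y 2 2) 2 x) + (pd (fun y => g y 2 2) 2 x) - (pd (fun y => g y 2 2) 2 x)) * (X x 2) * (X x 2)) * h22 +
      (1/2) * hF3 +
      (1/2) * (X x 0) * (pd (fun y => X y 0) 1 x) * (hsym 0 0) +
      (1/2) * (X x 0) * (pd (fun y => X y 1) 1 x) * (hsym 1 0) +
      (1/2) * (X x 0) * (pd (fun y => X y 2) 1 x) * (hsym 2 0) +
      (1/2) * (X x 1) * (pd (fun y => X y 0) 1 x) * (hsym 0 1) +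
      (1/2) * (X x 1) * (pd (fun y => X y 1) 1 x) * (hsym 1 1) +
      (1/2) * (X x 1) * (pd (fun y => X y 2) 1 x) * (hsym 2 1) +
      (1/2) * (X x 2) * (pd (fun y => X y 0) 1 x) * (hsym 0 2) +
      (1/2) * (X x 2) * (pd (fun y => X y 1) 1 x) * (hsym 1 2) +
      (1/2) * (X x 2) * (pd (fun y => X y 2) 1 x) * (hsym 2 2)
  · norm_num [Fin.ext_iff] at h20 h21 h22
    linear_combination
      (1/2) * (((pd (fun y => g y 0 0) 0 x) + (pd (fun y => g y 0 0) 0 x) - (pd (fun y => g y 0 0) 0 x)) * (X x 0) * (X x 0) + ((pd (fun y => g y 0 1) 0 x) + (pd (fun y => g y 0 0) 1 x) - (pd (fun y => g y 0 1) 0 x)) * (X x 0) * (X x 1) + ((pd (fun y => g y 0 2) 0 x) + (pd (fun y => g y 0 0) 2 x) - (pd (fun y => g y 0 2) 0 x)) * (X x 0) * (X x 2) + ((pd (fun y => g y 0 0) 1 x) + (pd (fun y => g y 0 1) 0 x) - (pd (fun y => g y 1 0) 0 x)) * (X x 1) * (X x 0) + ((pd (fun y => g y 0 1) 1 x) + (pd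 (fun y => g y 0 1) 1 x) - (pd (fun y => g y 1 1) 0 x)) * (X x 1) * (X x 1) + ((pd (fun y => g y 0 2) 1 x) + (pd (fun y => g y 0 1) 2 x) - (pd (fun y => g y 1 2) 0 x)) * (X x 1) * (X x 2) + ((pd (fun y => g y 0 0) 2 x) + (pd (fun y => g y 0 2) 0 x) - (pd (fun y => g y 2 0) 0 x)) * (X x 2) * (X x 0) + ((pd (fun y => g y 0 1) 2 x) + (pd (fun y => g y 0 2) 1 x) - (pd (fun y => g y 2 1) 0 x)) * (X x 2) * (X x 1) + ((pd (fun y => g y 0 2) 2 x) + (pd (fun y => g y 0 2) 2 x) - (pd (fun y => g y 2 2) 0 x)) * (X x 2) * (X x 2)) * h20 +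
      (1/2) * (((pd (fun y => g y 1 0) 0 x) + (pd (fun y => g y 1 0) 0 x) - (pd (fun y => g y 0 0) 1 x)) * (X x 0) * (X x 0) + ((pd (fun y => g y 1 1) 0 x) + (pd (fun y => g y 1 0) 1 x) - (pd (fun y => g y 0 1) 1 x)) * (X x 0) * (X x 1) + ((pd (fun y => g y 1 2) 0 x) + (pd (fun y => g y 1 0) 2 x) - (pd (fun y => g y 0 2) 1 x)) * (X x 0) * (X x 2) + ((pd (fun y => g y 1 0) 1 x) + (pd (fun y => g y 1 1) 0 x) - (pd (fun y => g y 1 0) 1 x)) * (X x 1) * (X x 0) + ((pd (fun y => g y 1 1) 1 x) + (pd (fun y => g y 1 1) 1 x) - (pd (fun y => g y 1 1) 1 x)) * (X x 1) * (X x 1) + ((pd (fun y => g y 1 2) 1 x) + (pd (fun y => g y 1 1) 2 x) - (pd (fun y => g y 1 2) 1 x)) * (X x 1) * (X x 2) + ((pd (fun y => g y 1 0) 2 x) + (pd (fun y => g y 1 2) 0 x) - (pd (fun y => g y 2 0) 1 x)) * (X x 2) * (X x 0) + ((pd (fun y => g y 1 1) 2 x) + (pd (fun y => g y 1 2) 1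 x) - (pd (fun y => g y 2 1) 1 x)) * (X x 2) * (X x 1) + ((pd (fun y => g y 1 2) 2 x) + (pd (fun y => g y 1 2) 2 x) - (pd (fun y => g y 2 2) 1 x)) * (X x 2) * (X x 2)) * h21 +
      (1/2) * (((pd (fun y => g y 2 0) 0 x) + (pd (fun y => g y 2 0) 0 x) - (pd (fun y => g y 0 0) 2 x)) * (X x 0) * (X x 0) + ((pd (fun y => g y 2 1) 0 x) + (pd (fun y => g y 2 0) 1 x) - (pd (fun y => g y 0 1) 2 x)) * (X x 0) * (X x 1) + ((pd (fun y => g y 2 2) 0 x) + (pd (fun y => g y 2 0) 2 x) - (pd (fun y => g y 0 2) 2 x)) * (X x 0) * (X x 2) + ((pd (fun y => g y 2 0) 1 x) + (pd (fun y => g y 2 1) 0 x) - (pd (fun y => g y 1 0) 2 x)) * (X x 1) * (X x 0) + ((pd (fun y => g y 2 1) 1 x) + (pd (fun y => g y 2 1) 1 x) - (pd (fun y => g y 1 1) 2 x)) * (X x 1) * (X x 1) + ((pd (fun y => g y 2 2) 1 x) + (pd (fun y => g y 2 1) 2 x) - (pd (fun y => g y 1 2) 2 x)) * (X x 1) * (X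 x 2) + ((pd (fun y => g y 2 0) 2 x) + (pd (fun y => g y 2 2) 0 x) - (pd (fun y => g y 2 0) 2 x)) * (X x 2) * (X x 0) + ((pd (fun y => g y 2 1) 2 x) + (pd (fun y => g y 2 2) 1 x) - (pd (fun y => g y 2 1) 2 x)) * (X x 2) * (X x 1) + ((pd (fun y => g y 2 2) 2 x) + (pd (fun y => g y 2 2) 2 x) - (pd (fun y => g y 2 2) 2 x)) * (X x 2) * (X x 2)) * h22 +
      (1/2) * hF3 +
      (1/2) * (X x 0) * (pd (fun y => X y 0) 2 x) * (hsym 0 0) +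
      (1/2) * (X x 0) * (pd (fun y => X y 1) 2 x) * (hsym 1 0) +
      (1/2) * (X x 0) * (pd (fun y => X y 2) 2 x) * (hsym 2 0) +
      (1/2) * (X x 1) * (pd (fun y => X y 0) 2 x) * (hsym 0 1) +
      (1/2) * (X x 1) * (pd (fun y => X y 1) 2 x) * (hsym 1 1) +
      (1/2) * (X x 1) * (pd (fun y => X y 2) 2 x) * (hsym 2 1) +
      (1/2) * (X x 2) * (pd (fun y => X y 0) 2 x) * (hsym 0 2) +
      (1/2) * (X x 2) * (pd (fun y => X y 1) 2 x) * (hsym 1 2) +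
      (1/2) * (X x 2) * (pd (fun y => X y 2) 2 x) * (hsym 2 2)


/-- Given a submersive harmonic morphism `φ : (M³,g̃) → (N²,h)` with
dilation `λ` and integrability 2-form `Ω̃ = dθ̃` (`θ̃ = g̃(Ũ,·)`), a 1-form `η` and a 1-form
`θ` with `dθ + η∧θ = Ω̃` and `θ(Ũ) ≠ 0` everywhere, the map
`φ : (M³, g = φ*h/λ² + θ²) → (N²,h)` is semi-conformal and the mean curvature of its fibres
is the `g`-horizontal part of `η♯`. -/
theorem prescribed_mean_curvature
    (gt : (Fin 3 → ℝ) → Matrix (Fin 3) (Fin 3) ℝ)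
    (h : (Fin 2 → ℝ) → Matrix (Fin 2) (Fin 2) ℝ)
    (φ : (Fin 3 → ℝ) → Fin 2 → ℝ) (lam : (Fin 3 → ℝ) → ℝ)
    (Ut : (Fin 3 → ℝ) → Fin 3 → ℝ)
    (η θ : (Fin 3 → ℝ) → Fin 3 → ℝ)
    (hgt : IsMetric gt) (hh : IsMetric h)
    (hφ : ∀ α, ContDiff ℝ (⊤ : ℕ∞) fun x => φ x α)
    (hsub : ∀ x, Function.Surjective fun v : Fin 3 → ℝ =>
      (fun α => ∑ i, pd (fun y => φ y α) i x * v i : Fin 2 → ℝ))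
    (hlam : ContDiff ℝ (⊤ : ℕ∞) lam) (hlampos : ∀ x, 0 < lam x)
    -- `φ` is semi-conformal with dilation `λ` with respect to `g̃`
    (hsc : SemiConformal gt h φ lam)
    (hUt : SmoothVF Ut) (hUtvert : Vertical φ Ut) (hUtunit : UnitField gt Ut)
    -- `φ` is a harmonic morphism : being semi-conformal onto a surface, this is
    -- equivalent to the minimality (= geodesity) of the fibres
    (hmin : ∀ x k, covD gt Ut Ut x k = 0)
    (hηs : SmoothVF η) (hθs : SmoothVF θ)
    -- `dθ + η ∧ θ = Ω̃`, where `Ω̃ = dθ̃` and `θ̃ = g̃(Ũ, ·)`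
    (hext : ∀ x i j,
      (pd (fun y => θ y j) i x - pd (fun y => θ y i) j x)
        + (η x i * θ x j - η x j * θ x i) =
      pd (fun y => flat gt Ut j y) i x - pd (fun y => flat gt Ut i y) j x)
    -- `θ(Ũ) ≠ 0` at every point
    (hθU : ∀ x, (∑ j, θ x j * Ut x j) ≠ 0) :
    SemiConformal (pullMetric h φ lam θ) h φ lam ∧
    (∀ U : (Fin 3 → ℝ) → Fin 3 → ℝ, SmoothVF U → Vertical φ U →
      UnitField (pullMetric h φ lam θ) U →
      ∀ x k, covD (pullMetric h φ lam θ) U U x k =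
        Hproj (pullMetric h φ lam θ) U
          (fun y l => ∑ j, ginv (pullMetric h φ lam θ) y l j * η y j) x k) := by
  classical
  have hker0 : ∀ y : Fin 3 → ℝ,
      (Matrix.of fun (a : Fin 2) (b : Fin 3) => pd (fun z => φ z a) b y).mulVec
        = fun v => (fun α => ∑ i, pd (fun z => φ z α) i y * v i : Fin 2 → ℝ) := by
    intro y; funext v α
    simp [Matrix.mulVec, dotProduct]
  have hUt0 : ∀ y, Ut y ≠ 0 := by
    intro y h0
    have h1 := hUtunit y
    rw [h0] at h1
    simp at h1
  have halg : ∀ y : Fin 3 → ℝ,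
      ((pullMetric h φ lam θ y * (pullMetric h φ lam θ y)⁻¹ = 1) ∧
        ((pullMetric h φ lam θ y)⁻¹ * pullMetric h φ lam θ y = 1)) ∧
      (∀ α β : Fin 2, (∑ i, ∑ j, (pullMetric h φ lam θ y)⁻¹ i j *
          (Matrix.of fun (a : Fin 2) (b : Fin 3) => pd (fun z => φ z a) b y) α i *
          (Matrix.of fun (a : Fin 2) (b : Fin 3) => pd (fun z => φ z a) b y) β j)
        = lam y ^ 2 * (h (φ y))⁻¹ α β) := by
    intro y
    refine pointwise_alg _ (θ y) (Ut y) (h (φ y)) (lam y) ?_ ?_ (hUt0 y) (hθU y)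
      (hh.2 (φ y)).2 (hlampos y).ne' (pullMetric h φ lam θ y) ?_
    · rw [hker0 y]; exact hsub y
    · rw [hker0 y]; exact funext fun α => hUtvert y α
    · rfl
  constructor
  · intro x α β
    have h2 := (halg x).2 α β
    simpa only [ginv, Matrix.of_apply] using h2
  intro U hU hUvert hUunit x k
  have hφc : ContDiff ℝ (⊤:ℕ∞) fun y => φ y := contDiff_pi.mpr hφ
  have hgc : ∀ i j, ContDiff ℝ (⊤:ℕ∞) fun y => pullMetric h φ lam θ y i j := by
    intro i j
    have h1 : ContDiff ℝ (⊤:ℕ∞) fun y => 1 / lam y ^ 2 :=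
      contDiff_const.div (hlam.pow 2) (fun y => pow_ne_zero 2 (hlampos y).ne')
    have h2 : ContDiff ℝ (⊤:ℕ∞) fun y =>
        ∑ α, ∑ β, h (φ y) α β * pd (fun z => φ z α) i y * pd (fun z => φ z β) j y := by
      apply ContDiff.sum; intro α _
      apply ContDiff.sum; intro β _
      exact (((hh.1 α β).comp hφc).mul (pd_smooth (hφ α) i)).mul (pd_smooth (hφ β) j)
    exact (h1.mul h2).add ((hθs i).mul (hθs j))
  have hgdx : ∀ i j, DifferentiableAt ℝ (fun y => pullMetric h φ lam θ y i j) x :=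
    fun i j => (hgc i j).differentiable (by simp) x
  have hUdx : ∀ k', DifferentiableAt ℝ (fun y => U y k') x :=
    fun k' => (hU k').differentiable (by simp) x
  have hgsym : ∀ (y : Fin 3 → ℝ) (i j : Fin 3),
      pullMetric h φ lam θ y j i = pullMetric h φ lam θ y i j := by
    intro y i j
    have hs := ((hh.2 (φ y)).1).apply 0 1
    simp only [pullMetric, Matrix.of_apply, Fin.sum_univ_two]
    linear_combination (1 / lam y ^ 2) *
      (pd (fun z => φ z 0) i y * pd (fun z => φ z 1) j y
        - pd (fun z => φ z 0) j y * pd (fun z => φ z 1) i y) * hs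
  have hwa : ∀ (y : Fin 3 → ℝ) (p : Fin 3),
      flat (pullMetric h φ lam θ) U p y = (∑ j, θ y j * U y j) * θ y p := by
    intro y p
    have hv0 := hUvert y 0
    have hv1 := hUvert y 1
    simp only [Fin.sum_univ_three] at hv0 hv1
    simp only [flat, pullMetric, Matrix.of_apply, Fin.sum_univ_three, Fin.sum_univ_two]
    linear_combination
      (1/lam y^2) * (h (φ y) 0 0 * pd (fun z => φ z 0) p y
        + h (φ y) 1 0 * pd (fun z => φ z 1) p y) * hv0 +
      (1/lam y^2) * (h (φ y) 0 1 * pd (fun z => φ z 0) p y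
        + h (φ y) 1 1 * pd (fun z => φ z 1) p y) * hv1
  have hE2 : ∀ y : Fin 3 → ℝ, (∑ j, θ y j * U y j) * (∑ j, θ y j * U y j) = 1 := by
    intro y
    have hv0 := hUvert y 0
    have hv1 := hUvert y 1
    have h1 := hUunit y
    simp only [pullMetric, Matrix.of_apply, Fin.sum_univ_three, Fin.sum_univ_two] at h1 hv0 hv1 ⊢
    linear_combination h1  +
      (-(1/lam y^2)) * (h (φ y) 0 0 * (pd (fun z => φ z 0) 0 y * U y 0 + pd (fun z => φ z 0) 1 y * U y 1 + pd (fun z => φ z 0) 2 y * U y 2) + h (φ y) 1 0 * (pd (fun z => φ z 1) 0 y * U y 0 + pd (fun z => φ z 1) 1 y * U y 1 + pd (fun z => φ z 1) 2 y * U y 2)) * hv0 +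
      (-(1/lam y^2)) * (h (φ y) 0 1 * (pd (fun z => φ z 0) 0 y * U y 0 + pd (fun z => φ z 0) 1 y * U y 1 + pd (fun z => φ z 0) 2 y * U y 2) + h (φ y) 1 1 * (pd (fun z => φ z 1) 0 y * U y 0 + pd (fun z => φ z 1) 1 y * U y 1 + pd (fun z => φ z 1) 2 y * U y 2)) * hv1
  have hediff : ∀ z, DifferentiableAt ℝ (fun y => ∑ j, θ y j * U y j) z := fun z =>
    DifferentiableAt.fun_sum (fun j _ =>
      ((hθs j).differentiable (by simp) z).mul ((hU j).differentiable (by simp) z))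
  have hεd : ∀ q, pd (fun y => ∑ j, θ y j * U y j) q x = 0 := by
    intro q
    have h1 : pd (fun y => (∑ j, θ y j * U y j) * (∑ j, θ y j * U y j)) q x = 0 := by
      have h2 : (fun y => (∑ j, θ y j * U y j) * (∑ j, θ y j * U y j)) = fun _ => (1:ℝ) :=
        funext hE2
      rw [h2, pd_const]
    rw [pd_mul (hediff x) (hediff x) q] at h1
    have hεx : (∑ j, θ x j * U x j) ≠ 0 := by
      intro h0
      have h2 := hE2 x
      rw [h0] at h2
      simp at h2
    have h3 : (∑ j, θ x j * U x j) * pd (fun y => ∑ j, θ y j * U y j) q x = 0 := by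
      linear_combination h1 / 2
    rcases mul_eq_zero.mp h3 with h4 | h4
    · exact absurd h4 hεx
    · exact h4
  have hdw : ∀ p q, pd (fun y => flat (pullMetric h φ lam θ) U p y) q x
      = (∑ j, θ x j * U x j) * pd (fun y => θ y p) q x := by
    intro p q
    have h2 : (fun y => flat (pullMetric h φ lam θ) U p y)
        = fun y => (∑ j, θ y j * U y j) * θ y p := funext fun y => hwa y p
    rw [h2, pd_mul (hediff x) ((hθs p).differentiable (by simp) x) q, hεd q, zero_mul, zero_add]
  have hkey := key_contract (pullMetric h φ lam θ) U x hgdx hUdx (hgsym x) hUunit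
    (by unfold ginv; exact (halg x).1.1)
  have hgtdx : ∀ i j, DifferentiableAt ℝ (fun y => gt y i j) x :=
    fun i j => (hgt.1 i j).differentiable (by simp) x
  have hgtinv : gt x * ginv gt x = 1 := by
    unfold ginv
    exact Matrix.mul_nonsing_inv _ (isUnit_iff_ne_zero.mpr (ne_of_gt (hgt.2 x).2.det_pos))
  have hkeyt := key_contract gt Ut x hgtdx
    (fun k' => (hUt k').differentiable (by simp) x)
    (fun i j => ((hgt.2 x).1).apply i j) hUtunit hgtinv
  have iota : ∀ m, (∑ i, Ut x i *
      (pd (fun y => flat gt Ut m y) i x - pd (fun y => flat gt Ut i y) m x)) = 0 := by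
    intro m
    rw [← hkeyt m]
    refine Finset.sum_eq_zero fun k' _ => ?_
    rw [hmin x k', mul_zero]
  have hPU : (Matrix.of fun (a : Fin 2) (b : Fin 3) => pd (fun z => φ z a) b x).mulVec (U x)
      = 0 := by
    rw [hker0 x]; exact funext fun α => hUvert x α
  have hPUt : (Matrix.of fun (a : Fin 2) (b : Fin 3) => pd (fun z => φ z a) b x).mulVec (Ut x)
      = 0 := by
    rw [hker0 x]; exact funext fun α => hUtvert x α
  have hsurj' : Function.Surjective
      (Matrix.of fun (a : Fin 2) (b : Fin 3) => pd (fun z => φ z a) b x).mulVec := by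
    rw [hker0 x]; exact hsub x
  obtain ⟨c, hc⟩ := ker_span _ hsurj' (Ut x) hPUt (hUt0 x) (U x) hPU
  have hcc : ∀ i, U x i = c * Ut x i := by
    intro i; rw [hc]; simp
  have hI : ∀ p q, (∑ k', pullMetric h φ lam θ x p k' * ginv (pullMetric h φ lam θ) x k' q)
      = if p = q then 1 else 0 := by
    intro p q
    have h2 := congrFun (congrFun (halg x).1.1 p) q
    simpa [Matrix.mul_apply, Matrix.one_apply, ginv] using h2
  have hw' : ∀ p, (∑ k', pullMetric h φ lam θ x p k' * U x k')
      = (∑ j, θ x j * U x j) * θ x p := by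
    intro p
    have h2 := hwa x p
    simpa only [flat] using h2
  have hcon : ∀ m, (∑ k', pullMetric h φ lam θ x m k' * covD (pullMetric h φ lam θ) U U x k')
      = ∑ k', pullMetric h φ lam θ x m k' *
          Hproj (pullMetric h φ lam θ) U
            (fun y l => ∑ j, ginv (pullMetric h φ lam θ) y l j * η y j) x k' := by
    intro m
    rw [hkey m]
    simp only [hdw, Hproj]
    have hx0 := hext x 0 m
    have hx1 := hext x 1 m
    have hx2 := hext x 2 m
    have hio := iota m
    have he2 := hE2 x
    have hI00 := hI 0 0
    have hI01 := hI 0 1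
    have hI02 := hI 0 2
    have hI10 := hI 1 0
    have hI11 := hI 1 1
    have hI12 := hI 1 2
    have hI20 := hI 2 0
    have hI21 := hI 2 1
    have hI22 := hI 2 2
    have hw0 := hw' 0
    have hw1 := hw' 1
    have hw2 := hw' 2
    norm_num [Fin.ext_iff] at hI00 hI01 hI02 hI10 hI11 hI12 hI20 hI21 hI22
    simp only [Fin.sum_univ_three] at hio he2 hw0 hw1 hw2 hI00 hI01 hI02 hI10 hI11 hI12 hI20 hI21 hI22 ⊢
    have hm3 : m = 0 ∨ m = 1 ∨ m = 2 := by fin_cases m <;> simp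
    rcases hm3 with rfl | rfl | rfl
    · linear_combination
        (θ x 0 * U x 0 + θ x 1 * U x 1 + θ x 2 * U x 2) * (U x 0) * hx0 +
        (θ x 0 * U x 0 + θ x 1 * U x 1 + θ x 2 * U x 2) * (U x 1) * hx1 +
        (θ x 0 * U x 0 + θ x 1 * U x 1 + θ x 2 * U x 2) * (U x 2) * hx2 +
        (θ x 0 * U x 0 + θ x 1 * U x 1 + θ x 2 * U x 2) * ((pd (fun y => flat gt Ut 0 y) 0 x) - (pd (fun y => flat gt Ut 0 y) 0 x)) * hcc 0 +
        (θ x 0 * U x 0 + θ x 1 * U x 1 + θ x 2 * U x 2) * ((pd (fun y => flat gt Ut 0 y) 1 x) - (pd (fun y => flat gt Ut 1 y) 0 x)) * hcc 1 +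
        (θ x 0 * U x 0 + θ x 1 * U x 1 + θ x 2 * U x 2) * ((pd (fun y => flat gt Ut 0 y) 2 x) - (pd (fun y => flat gt Ut 2 y) 0 x)) * hcc 2 +
        ((θ x 0 * U x 0 + θ x 1 * U x 1 + θ x 2 * U x 2) * c) * hio +
        (η x 0) * he2 +
        (-(η x 0)) * hI00 +
        (-(η x 1)) * hI01 +
        (-(η x 2)) * hI02 +
        (pullMetric h φ lam θ x 0 0 * (ginv (pullMetric h φ lam θ) x 0 0 * η x 0 + ginv (pullMetric h φ lam θ) x 0 1 * η x 1 + ginv (pullMetric h φ lam θ) x 0 2 * η x 2) * U x 0 + pullMetric h φ lam θ x 0 1 * (ginv (pullMetric h φ lam θ) x 0 0 * η x 0 + ginv (pullMetric h φ lam θ) x 0 1 * η x 1 + ginv (pullMetric h φ lam θ) x 0 2 * η x 2) * U x 1 + pullMetric h φ lam θ x 0 2 * (ginv (pullMetric h φ lam θ) x 0 0 * η x 0 + ginv (pullMetric h φ lam θ) x 0 1 * η x 1 + ginv (pullMetric h φ lam θ) x 0 2 * η x 2) * U x 2 + pullMetric h φ lam θ x 1 0 * (ginv (pullMetric h φ lam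 θ) x 1 0 * η x 0 + ginv (pullMetric h φ lam θ) x 1 1 * η x 1 + ginv (pullMetric h φ lam θ) x 1 2 * η x 2) * U x 0 + pullMetric h φ lam θ x 1 1 * (ginv (pullMetric h φ lam θ) x 1 0 * η x 0 + ginv (pullMetric h φ lam θ) x 1 1 * η x 1 + ginv (pullMetric h φ lam θ) x 1 2 * η x 2) * U x 1 + pullMetric h φ lam θ x 1 2 * (ginv (pullMetric h φ lam θ) x 1 0 * η x 0 + ginv (pullMetric h φ lam θ) x 1 1 * η x 1 + ginv (pullMetric h φ lam θ) x 1 2 * η x 2) * U x 2 + pullMetric h φ lam θ x 2 0 * (ginv (pullMetric h φ lam θ) x 2 0 * η x 0 + ginv (pullMetric h φ lam θ) x 2 1 * η x 1 + ginv (pullMetric h φ lam θ) x 2 2 * η x 2) * U x 0 + pullMetric h φ lam θ x 2 1 * (ginv (pullMetric h φ lam θ) x 2 0 * η x 0 + ginv (pullMetric h φ lam θ) x 2 1 * η x 1 + ginv (pullMetric h φ lam θ) x 2 2 * η x 2) * U x 1 + pullMetric h φ lam θ x 2 2 * (ginv (pullMetric h φ lam θ) x 2 0 * η x 0 + ginv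 (pullMetric h φ lam θ) x 2 1 * η x 1 + ginv (pullMetric h φ lam θ) x 2 2 * η x 2) * U x 2) * hw0 +
        (-((θ x 0 * U x 0 + θ x 1 * U x 1 + θ x 2 * U x 2) * (θ x 0) * (U x 0) * (ginv (pullMetric h φ lam θ) x 0 0 * η x 0 + ginv (pullMetric h φ lam θ) x 0 1 * η x 1 + ginv (pullMetric h φ lam θ) x 0 2 * η x 2))) * hgsym x 0 0 +
        (-((θ x 0 * U x 0 + θ x 1 * U x 1 + θ x 2 * U x 2) * (θ x 0) * (U x 1) * (ginv (pullMetric h φ lam θ) x 0 0 * η x 0 + ginv (pullMetric h φ lam θ) x 0 1 * η x 1 + ginv (pullMetric h φ lam θ) x 0 2 * η x 2))) * hgsym x 0 1 +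
        (-((θ x 0 * U x 0 + θ x 1 * U x 1 + θ x 2 * U x 2) * (θ x 0) * (U x 2) * (ginv (pullMetric h φ lam θ) x 0 0 * η x 0 + ginv (pullMetric h φ lam θ) x 0 1 * η x 1 + ginv (pullMetric h φ lam θ) x 0 2 * η x 2))) * hgsym x 0 2 +
        (-((θ x 0 * U x 0 + θ x 1 * U x 1 + θ x 2 * U x 2) * (θ x 0) * (U x 0) * (ginv (pullMetric h φ lam θ) x 1 0 * η x 0 + ginv (pullMetric h φ lam θ) x 1 1 * η x 1 + ginv (pullMetric h φ lam θ) x 1 2 * η x 2))) * hgsym x 1 0 +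
        (-((θ x 0 * U x 0 + θ x 1 * U x 1 + θ x 2 * U x 2) * (θ x 0) * (U x 1) * (ginv (pullMetric h φ lam θ) x 1 0 * η x 0 + ginv (pullMetric h φ lam θ) x 1 1 * η x 1 + ginv (pullMetric h φ lam θ) x 1 2 * η x 2))) * hgsym x 1 1 +
        (-((θ x 0 * U x 0 + θ x 1 * U x 1 + θ x 2 * U x 2) * (θ x 0) * (U x 2) * (ginv (pullMetric h φ lam θ) x 1 0 * η x 0 + ginv (pullMetric h φ lam θ) x 1 1 * η x 1 + ginv (pullMetric h φ lam θ) x 1 2 * η x 2))) * hgsym x 1 2 +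
        (-((θ x 0 * U x 0 + θ x 1 * U x 1 + θ x 2 * U x 2) * (θ x 0) * (U x 0) * (ginv (pullMetric h φ lam θ) x 2 0 * η x 0 + ginv (pullMetric h φ lam θ) x 2 1 * η x 1 + ginv (pullMetric h φ lam θ) x 2 2 * η x 2))) * hgsym x 2 0 +
        (-((θ x 0 * U x 0 + θ x 1 * U x 1 + θ x 2 * U x 2) * (θ x 0) * (U x 1) * (ginv (pullMetric h φ lam θ) x 2 0 * η x 0 + ginv (pullMetric h φ lam θ) x 2 1 * η x 1 + ginv (pullMetric h φ lam θ) x 2 2 * η x 2))) * hgsym x 2 1 +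
        (-((θ x 0 * U x 0 + θ x 1 * U x 1 + θ x 2 * U x 2) * (θ x 0) * (U x 2) * (ginv (pullMetric h φ lam θ) x 2 0 * η x 0 + ginv (pullMetric h φ lam θ) x 2 1 * η x 1 + ginv (pullMetric h φ lam θ) x 2 2 * η x 2))) * hgsym x 2 2 +
        ((θ x 0 * U x 0 + θ x 1 * U x 1 + θ x 2 * U x 2) * (θ x 0) * (U x 0) * (η x 0)) * hI00 +
        ((θ x 0 * U x 0 + θ x 1 * U x 1 + θ x 2 * U x 2) * (θ x 0) * (U x 0) * (η x 1)) * hI01 +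
        ((θ x 0 * U x 0 + θ x 1 * U x 1 + θ x 2 * U x 2) * (θ x 0) * (U x 0) * (η x 2)) * hI02 +
        ((θ x 0 * U x 0 + θ x 1 * U x 1 + θ x 2 * U x 2) * (θ x 0) * (U x 1) * (η x 0)) * hI10 +
        ((θ x 0 * U x 0 + θ x 1 * U x 1 + θ x 2 * U x 2) * (θ x 0) * (U x 1) * (η x 1)) * hI11 +
        ((θ x 0 * U x 0 + θ x 1 * U x 1 + θ x 2 * U x 2) * (θ x 0) * (U x 1) * (η x 2)) * hI12 +
        ((θ x 0 * U x 0 + θ x 1 * U x 1 + θ x 2 * U x 2) * (θ x 0) * (U x 2) * (η x 0)) * hI20 +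
        ((θ x 0 * U x 0 + θ x 1 * U x 1 + θ x 2 * U x 2) * (θ x 0) * (U x 2) * (η x 1)) * hI21 +
        ((θ x 0 * U x 0 + θ x 1 * U x 1 + θ x 2 * U x 2) * (θ x 0) * (U x 2) * (η x 2)) * hI22
    · linear_combination
        (θ x 0 * U x 0 + θ x 1 * U x 1 + θ x 2 * U x 2) * (U x 0) * hx0 +
        (θ x 0 * U x 0 + θ x 1 * U x 1 + θ x 2 * U x 2) * (U x 1) * hx1 +
        (θ x 0 * U x 0 + θ x 1 * U x 1 + θ x 2 * U x 2) * (U x 2) * hx2 +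
        (θ x 0 * U x 0 + θ x 1 * U x 1 + θ x 2 * U x 2) * ((pd (fun y => flat gt Ut 1 y) 0 x) - (pd (fun y => flat gt Ut 0 y) 1 x)) * hcc 0 +
        (θ x 0 * U x 0 + θ x 1 * U x 1 + θ x 2 * U x 2) * ((pd (fun y => flat gt Ut 1 y) 1 x) - (pd (fun y => flat gt Ut 1 y) 1 x)) * hcc 1 +
        (θ x 0 * U x 0 + θ x 1 * U x 1 + θ x 2 * U x 2) * ((pd (fun y => flat gt Ut 1 y) 2 x) - (pd (fun y => flat gt Ut 2 y) 1 x)) * hcc 2 +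
        ((θ x 0 * U x 0 + θ x 1 * U x 1 + θ x 2 * U x 2) * c) * hio +
        (η x 1) * he2 +
        (-(η x 0)) * hI10 +
        (-(η x 1)) * hI11 +
        (-(η x 2)) * hI12 +
        (pullMetric h φ lam θ x 0 0 * (ginv (pullMetric h φ lam θ) x 0 0 * η x 0 + ginv (pullMetric h φ lam θ) x 0 1 * η x 1 + ginv (pullMetric h φ lam θ) x 0 2 * η x 2) * U x 0 + pullMetric h φ lam θ x 0 1 * (ginv (pullMetric h φ lam θ) x 0 0 * η x 0 + ginv (pullMetric h φ lam θ) x 0 1 * η x 1 + ginv (pullMetric h φ lam θ) x 0 2 * η x 2) * U x 1 + pullMetric h φ lam θ x 0 2 * (ginv (pullMetric h φ lam θ) x 0 0 * η x 0 + ginv (pullMetric h φ lam θ) x 0 1 * η x 1 + ginv (pullMetric h φ lam θ) x 0 2 * η x 2) * U x 2 + pullMetric h φ lam θ x 1 0 * (ginv (pullMetric h φ lam θ) x 1 0 * η x 0 + ginv (pullMetric h φ lam θ) x 1 1 * η x 1 + ginv (pullMetric h φ lam θ) x 1 2 * η x 2) * U x 0 + pullMetric h φ lam θ x 1 1 * (ginv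 (pullMetric h φ lam θ) x 1 0 * η x 0 + ginv (pullMetric h φ lam θ) x 1 1 * η x 1 + ginv (pullMetric h φ lam θ) x 1 2 * η x 2) * U x 1 + pullMetric h φ lam θ x 1 2 * (ginv (pullMetric h φ lam θ) x 1 0 * η x 0 + ginv (pullMetric h φ lam θ) x 1 1 * η x 1 + ginv (pullMetric h φ lam θ) x 1 2 * η x 2) * U x 2 + pullMetric h φ lam θ x 2 0 * (ginv (pullMetric h φ lam θ) x 2 0 * η x 0 + ginv (pullMetric h φ lam θ) x 2 1 * η x 1 + ginv (pullMetric h φ lam θ) x 2 2 * η x 2) * U x 0 + pullMetric h φ lam θ x 2 1 * (ginv (pullMetric h φ lam θ) x 2 0 * η x 0 + ginv (pullMetric h φ lam θ) x 2 1 * η x 1 + ginv (pullMetric h φ lam θ) x 2 2 * η x 2) * U x 1 + pullMetric h φ lam θ x 2 2 * (ginv (pullMetric h φ lam θ) x 2 0 * η x 0 + ginv (pullMetric h φ lam θ) x 2 1 * η x 1 + ginv (pullMetric h φ lam θ) x 2 2 * η x 2) * U x 2) * hw1 +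
        (-((θ x 0 * U x 0 + θ x 1 * U x 1 + θ x 2 * U x 2) * (θ x 1) * (U x 0) * (ginv (pullMetric h φ lam θ) x 0 0 * η x 0 + ginv (pullMetric h φ lam θ) x 0 1 * η x 1 + ginv (pullMetric h φ lam θ) x 0 2 * η x 2))) * hgsym x 0 0 +
        (-((θ x 0 * U x 0 + θ x 1 * U x 1 + θ x 2 * U x 2) * (θ x 1) * (U x 1) * (ginv (pullMetric h φ lam θ) x 0 0 * η x 0 + ginv (pullMetric h φ lam θ) x 0 1 * η x 1 + ginv (pullMetric h φ lam θ) x 0 2 * η x 2))) * hgsym x 0 1 +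
        (-((θ x 0 * U x 0 + θ x 1 * U x 1 + θ x 2 * U x 2) * (θ x 1) * (U x 2) * (ginv (pullMetric h φ lam θ) x 0 0 * η x 0 + ginv (pullMetric h φ lam θ) x 0 1 * η x 1 + ginv (pullMetric h φ lam θ) x 0 2 * η x 2))) * hgsym x 0 2 +
        (-((θ x 0 * U x 0 + θ x 1 * U x 1 + θ x 2 * U x 2) * (θ x 1) * (U x 0) * (ginv (pullMetric h φ lam θ) x 1 0 * η x 0 + ginv (pullMetric h φ lam θ) x 1 1 * η x 1 + ginv (pullMetric h φ lam θ) x 1 2 * η x 2))) * hgsym x 1 0 +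
        (-((θ x 0 * U x 0 + θ x 1 * U x 1 + θ x 2 * U x 2) * (θ x 1) * (U x 1) * (ginv (pullMetric h φ lam θ) x 1 0 * η x 0 + ginv (pullMetric h φ lam θ) x 1 1 * η x 1 + ginv (pullMetric h φ lam θ) x 1 2 * η x 2))) * hgsym x 1 1 +
        (-((θ x 0 * U x 0 + θ x 1 * U x 1 + θ x 2 * U x 2) * (θ x 1) * (U x 2) * (ginv (pullMetric h φ lam θ) x 1 0 * η x 0 + ginv (pullMetric h φ lam θ) x 1 1 * η x 1 + ginv (pullMetric h φ lam θ) x 1 2 * η x 2))) * hgsym x 1 2 +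
        (-((θ x 0 * U x 0 + θ x 1 * U x 1 + θ x 2 * U x 2) * (θ x 1) * (U x 0) * (ginv (pullMetric h φ lam θ) x 2 0 * η x 0 + ginv (pullMetric h φ lam θ) x 2 1 * η x 1 + ginv (pullMetric h φ lam θ) x 2 2 * η x 2))) * hgsym x 2 0 +
        (-((θ x 0 * U x 0 + θ x 1 * U x 1 + θ x 2 * U x 2) * (θ x 1) * (U x 1) * (ginv (pullMetric h φ lam θ) x 2 0 * η x 0 + ginv (pullMetric h φ lam θ) x 2 1 * η x 1 + ginv (pullMetric h φ lam θ) x 2 2 * η x 2))) * hgsym x 2 1 +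
        (-((θ x 0 * U x 0 + θ x 1 * U x 1 + θ x 2 * U x 2) * (θ x 1) * (U x 2) * (ginv (pullMetric h φ lam θ) x 2 0 * η x 0 + ginv (pullMetric h φ lam θ) x 2 1 * η x 1 + ginv (pullMetric h φ lam θ) x 2 2 * η x 2))) * hgsym x 2 2 +
        ((θ x 0 * U x 0 + θ x 1 * U x 1 + θ x 2 * U x 2) * (θ x 1) * (U x 0) * (η x 0)) * hI00 +
        ((θ x 0 * U x 0 + θ x 1 * U x 1 + θ x 2 * U x 2) * (θ x 1) * (U x 0) * (η x 1)) * hI01 +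
        ((θ x 0 * U x 0 + θ x 1 * U x 1 + θ x 2 * U x 2) * (θ x 1) * (U x 0) * (η x 2)) * hI02 +
        ((θ x 0 * U x 0 + θ x 1 * U x 1 + θ x 2 * U x 2) * (θ x 1) * (U x 1) * (η x 0)) * hI10 +
        ((θ x 0 * U x 0 + θ x 1 * U x 1 + θ x 2 * U x 2) * (θ x 1) * (U x 1) * (η x 1)) * hI11 +
        ((θ x 0 * U x 0 + θ x 1 * U x 1 + θ x 2 * U x 2) * (θ x 1) * (U x 1) * (η x 2)) * hI12 +
        ((θ x 0 * U x 0 + θ x 1 * U x 1 + θ x 2 * U x 2) * (θ x 1) * (U x 2) * (η x 0)) * hI20 +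
        ((θ x 0 * U x 0 + θ x 1 * U x 1 + θ x 2 * U x 2) * (θ x 1) * (U x 2) * (η x 1)) * hI21 +
        ((θ x 0 * U x 0 + θ x 1 * U x 1 + θ x 2 * U x 2) * (θ x 1) * (U x 2) * (η x 2)) * hI22
    · linear_combination
        (θ x 0 * U x 0 + θ x 1 * U x 1 + θ x 2 * U x 2) * (U x 0) * hx0 +
        (θ x 0 * U x 0 + θ x 1 * U x 1 + θ x 2 * U x 2) * (U x 1) * hx1 +
        (θ x 0 * U x 0 + θ x 1 * U x 1 + θ x 2 * U x 2) * (U x 2) * hx2 +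
        (θ x 0 * U x 0 + θ x 1 * U x 1 + θ x 2 * U x 2) * ((pd (fun y => flat gt Ut 2 y) 0 x) - (pd (fun y => flat gt Ut 0 y) 2 x)) * hcc 0 +
        (θ x 0 * U x 0 + θ x 1 * U x 1 + θ x 2 * U x 2) * ((pd (fun y => flat gt Ut 2 y) 1 x) - (pd (fun y => flat gt Ut 1 y) 2 x)) * hcc 1 +
        (θ x 0 * U x 0 + θ x 1 * U x 1 + θ x 2 * U x 2) * ((pd (fun y => flat gt Ut 2 y) 2 x) - (pd (fun y => flat gt Ut 2 y) 2 x)) * hcc 2 +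
        ((θ x 0 * U x 0 + θ x 1 * U x 1 + θ x 2 * U x 2) * c) * hio +
        (η x 2) * he2 +
        (-(η x 0)) * hI20 +
        (-(η x 1)) * hI21 +
        (-(η x 2)) * hI22 +
        (pullMetric h φ lam θ x 0 0 * (ginv (pullMetric h φ lam θ) x 0 0 * η x 0 + ginv (pullMetric h φ lam θ) x 0 1 * η x 1 + ginv (pullMetric h φ lam θ) x 0 2 * η x 2) * U x 0 + pullMetric h φ lam θ x 0 1 * (ginv (pullMetric h φ lam θ) x 0 0 * η x 0 + ginv (pullMetric h φ lam θ) x 0 1 * η x 1 + ginv (pullMetric h φ lam θ) x 0 2 * η x 2) * U x 1 + pullMetric h φ lam θ x 0 2 * (ginv (pullMetric h φ lam θ) x 0 0 * η x 0 + ginv (pullMetric h φ lam θ) x 0 1 * η x 1 + ginv (pullMetric h φ lam θ) x 0 2 * η x 2) * U x 2 + pullMetric h φ lam θ x 1 0 * (ginv (pullMetric h φ lam θ) x 1 0 * η x 0 + ginv (pullMetric h φ lam θ) x 1 1 * η x 1 + ginv (pullMetric h φ lam θ) x 1 2 * η x 2) * U x 0 + pullMetric h φ lam θ x 1 1 * (ginv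 (pullMetric h φ lam θ) x 1 0 * η x 0 + ginv (pullMetric h φ lam θ) x 1 1 * η x 1 + ginv (pullMetric h φ lam θ) x 1 2 * η x 2) * U x 1 + pullMetric h φ lam θ x 1 2 * (ginv (pullMetric h φ lam θ) x 1 0 * η x 0 + ginv (pullMetric h φ lam θ) x 1 1 * η x 1 + ginv (pullMetric h φ lam θ) x 1 2 * η x 2) * U x 2 + pullMetric h φ lam θ x 2 0 * (ginv (pullMetric h φ lam θ) x 2 0 * η x 0 + ginv (pullMetric h φ lam θ) x 2 1 * η x 1 + ginv (pullMetric h φ lam θ) x 2 2 * η x 2) * U x 0 + pullMetric h φ lam θ x 2 1 * (ginv (pullMetric h φ lam θ) x 2 0 * η x 0 + ginv (pullMetric h φ lam θ) x 2 1 * η x 1 + ginv (pullMetric h φ lam θ) x 2 2 * η x 2) * U x 1 + pullMetric h φ lam θ x 2 2 * (ginv (pullMetric h φ lam θ) x 2 0 * η x 0 + ginv (pullMetric h φ lam θ) x 2 1 * η x 1 + ginv (pullMetric h φ lam θ) x 2 2 * η x 2) * U x 2) * hw2 +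
        (-((θ x 0 * U x 0 + θ x 1 * U x 1 + θ x 2 * U x 2) * (θ x 2) * (U x 0) * (ginv (pullMetric h φ lam θ) x 0 0 * η x 0 + ginv (pullMetric h φ lam θ) x 0 1 * η x 1 + ginv (pullMetric h φ lam θ) x 0 2 * η x 2))) * hgsym x 0 0 +
        (-((θ x 0 * U x 0 + θ x 1 * U x 1 + θ x 2 * U x 2) * (θ x 2) * (U x 1) * (ginv (pullMetric h φ lam θ) x 0 0 * η x 0 + ginv (pullMetric h φ lam θ) x 0 1 * η x 1 + ginv (pullMetric h φ lam θ) x 0 2 * η x 2))) * hgsym x 0 1 +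
        (-((θ x 0 * U x 0 + θ x 1 * U x 1 + θ x 2 * U x 2) * (θ x 2) * (U x 2) * (ginv (pullMetric h φ lam θ) x 0 0 * η x 0 + ginv (pullMetric h φ lam θ) x 0 1 * η x 1 + ginv (pullMetric h φ lam θ) x 0 2 * η x 2))) * hgsym x 0 2 +
        (-((θ x 0 * U x 0 + θ x 1 * U x 1 + θ x 2 * U x 2) * (θ x 2) * (U x 0) * (ginv (pullMetric h φ lam θ) x 1 0 * η x 0 + ginv (pullMetric h φ lam θ) x 1 1 * η x 1 + ginv (pullMetric h φ lam θ) x 1 2 * η x 2))) * hgsym x 1 0 +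
        (-((θ x 0 * U x 0 + θ x 1 * U x 1 + θ x 2 * U x 2) * (θ x 2) * (U x 1) * (ginv (pullMetric h φ lam θ) x 1 0 * η x 0 + ginv (pullMetric h φ lam θ) x 1 1 * η x 1 + ginv (pullMetric h φ lam θ) x 1 2 * η x 2))) * hgsym x 1 1 +
        (-((θ x 0 * U x 0 + θ x 1 * U x 1 + θ x 2 * U x 2) * (θ x 2) * (U x 2) * (ginv (pullMetric h φ lam θ) x 1 0 * η x 0 + ginv (pullMetric h φ lam θ) x 1 1 * η x 1 + ginv (pullMetric h φ lam θ) x 1 2 * η x 2))) * hgsym x 1 2 +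
        (-((θ x 0 * U x 0 + θ x 1 * U x 1 + θ x 2 * U x 2) * (θ x 2) * (U x 0) * (ginv (pullMetric h φ lam θ) x 2 0 * η x 0 + ginv (pullMetric h φ lam θ) x 2 1 * η x 1 + ginv (pullMetric h φ lam θ) x 2 2 * η x 2))) * hgsym x 2 0 +
        (-((θ x 0 * U x 0 + θ x 1 * U x 1 + θ x 2 * U x 2) * (θ x 2) * (U x 1) * (ginv (pullMetric h φ lam θ) x 2 0 * η x 0 + ginv (pullMetric h φ lam θ) x 2 1 * η x 1 + ginv (pullMetric h φ lam θ) x 2 2 * η x 2))) * hgsym x 2 1 +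
        (-((θ x 0 * U x 0 + θ x 1 * U x 1 + θ x 2 * U x 2) * (θ x 2) * (U x 2) * (ginv (pullMetric h φ lam θ) x 2 0 * η x 0 + ginv (pullMetric h φ lam θ) x 2 1 * η x 1 + ginv (pullMetric h φ lam θ) x 2 2 * η x 2))) * hgsym x 2 2 +
        ((θ x 0 * U x 0 + θ x 1 * U x 1 + θ x 2 * U x 2) * (θ x 2) * (U x 0) * (η x 0)) * hI00 +
        ((θ x 0 * U x 0 + θ x 1 * U x 1 + θ x 2 * U x 2) * (θ x 2) * (U x 0) * (η x 1)) * hI01 +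
        ((θ x 0 * U x 0 + θ x 1 * U x 1 + θ x 2 * U x 2) * (θ x 2) * (U x 0) * (η x 2)) * hI02 +
        ((θ x 0 * U x 0 + θ x 1 * U x 1 + θ x 2 * U x 2) * (θ x 2) * (U x 1) * (η x 0)) * hI10 +
        ((θ x 0 * U x 0 + θ x 1 * U x 1 + θ x 2 * U x 2) * (θ x 2) * (U x 1) * (η x 1)) * hI11 +
        ((θ x 0 * U x 0 + θ x 1 * U x 1 + θ x 2 * U x 2) * (θ x 2) * (U x 1) * (η x 2)) * hI12 +
        ((θ x 0 * U x 0 + θ x 1 * U x 1 + θ x 2 * U x 2) * (θ x 2) * (U x 2) * (η x 0)) * hI20 +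
        ((θ x 0 * U x 0 + θ x 1 * U x 1 + θ x 2 * U x 2) * (θ x 2) * (U x 2) * (η x 1)) * hI21 +
        ((θ x 0 * U x 0 + θ x 1 * U x 1 + θ x 2 * U x 2) * (θ x 2) * (U x 2) * (η x 2)) * hI22
  have hvec : (pullMetric h φ lam θ x).mulVec (covD (pullMetric h φ lam θ) U U x)
      = (pullMetric h φ lam θ x).mulVec
          (Hproj (pullMetric h φ lam θ) U
            (fun y l => ∑ j, ginv (pullMetric h φ lam θ) y l j * η y j) x) := by
    funext m
    simpa only [Matrix.mulVec, dotProduct] using hcon m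
  have hfin := congrArg (fun v => ((pullMetric h φ lam θ x)⁻¹).mulVec v) hvec
  simp only [Matrix.mulVec_mulVec, (halg x).1.2, Matrix.one_mulVec] at hfin
  exact congrFun hfin k
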